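/- Let σ > 0 and define φ(ζ) = √(2/π) · ∫₀^{ζ/(2σ)} exp(-t²/2) dt. Let r₁, r₂, s₁, s₂ be positive reals with r₁·r₂ = s₁·s₂ and max{s₁, s₂} < max{r₁, r₂}. Then φ(r₁)·φ(r₂) < φ(s₁)·φ(s₂). -/

import Mathlib

noncomputable def phi (σ ζ : ℝ) : ℝ :=
  Real.sqrt (2/Real.pi) * ∫ t in (0:ℝ)..(ζ/(2*σ)), Real.exp (-t^2/2)

open Real intervalIntegral Set

noncomputable def II (x : ℝ) : ℝ := ∫ t in (0:ℝ)..x, Real.exp (-t^2/2)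

lemma fcont : Continuous (fun t : ℝ => Real.exp (-t^2/2)) := by continuity

lemma hII (x : ℝ) : HasDerivAt II (Real.exp (-x^2/2)) x :=
  intervalIntegral.integral_hasDerivAt_right
    (fcont.intervalIntegrable 0 x)
    fcont.aestronglyMeasurable.stronglyMeasurableAtFilter
    fcont.continuousAt

lemma IIcont : Continuous II := Differentiable.continuous (fun x => (hII x).differentiableAt)

lemma IIpos {x : ℝ} (hx : 0 < x) : 0 < II x :=
  intervalIntegral_pos_of_pos (fcont.intervalIntegrable 0 x) (fun _ => Real.exp_pos _) hx

lemma fexpderiv (x : ℝ) : HasDerivAt (fun t : ℝ => Real.exp (-t^2/2)) (-x * Real.exp (-x^2/2)) x := by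
  have h : HasDerivAt (fun t : ℝ => -t^2/2) (-x) x := by
    have := ((hasDerivAt_pow 2 x).neg).div_const 2
    convert this using 1 <;> first | rfl | (push_cast; ring)
  have := h.exp
  convert this using 1; ring

-- D lemma : (1 - y^2) * II y < y * exp (-y^2/2) for y > 0
lemma Dpos {y : ℝ} (hy : 0 < y) : (1 - y^2) * II y < y * Real.exp (-y^2/2) := by
  set D : ℝ → ℝ := fun t => t * Real.exp (-t^2/2) - (1 - t^2) * II t with hDdef
  have hD : ∀ t : ℝ, HasDerivAt D (2 * t * II t) t := by
    intro t
    have h1 : HasDerivAt (fun s : ℝ => s * Real.exp (-s^2/2))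
        (1 * Real.exp (-t^2/2) + t * (-t * Real.exp (-t^2/2))) t :=
      (hasDerivAt_id t).mul (fexpderiv t)
    have h2 : HasDerivAt (fun s : ℝ => (1 - s^2) * II s)
        ((0 - 2 * t^1) * II t + (1 - t^2) * Real.exp (-t^2/2)) t := by
      exact ((hasDerivAt_const t (1:ℝ)).sub (hasDerivAt_pow 2 t)).mul (hII t)
    have := h1.sub h2
    convert this using 1 <;> first | rfl | (push_cast; ring)
  have hmono : StrictMonoOn D (Ici 0) := by
    apply strictMonoOn_of_deriv_pos (convex_Ici 0)
      (Continuous.continuousOn (Differentiable.continuous fun t => (hD t).differentiableAt))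
    intro t ht
    rw [interior_Ici] at ht
    rw [(hD t).deriv]
    exact mul_pos (mul_pos two_pos ht) (IIpos ht)
  have h0 : D 0 = 0 := by simp [hDdef, II]
  have := hmono (le_refl (0:ℝ)) (le_of_lt hy) hy
  rw [h0] at this
  simp only [hDdef] at this
  linarith

-- monotonicity of g: for 0 < y < x, x f x I y < y f y I x
lemma monog {x y : ℝ} (hy : 0 < y) (hyx : y < x) :
    x * Real.exp (-x^2/2) * II y < y * Real.exp (-y^2/2) * II x := by
  set G : ℝ → ℝ := fun s => s * Real.exp (-s^2/2) * II y - y * Real.exp (-y^2/2) * II s with hGdef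
  have hG : ∀ s : ℝ, HasDerivAt G
      ((1 - s^2) * Real.exp (-s^2/2) * II y - y * Real.exp (-y^2/2) * Real.exp (-s^2/2)) s := by
    intro s
    have h1 : HasDerivAt (fun u : ℝ => u * Real.exp (-u^2/2) * II y)
        ((1 * Real.exp (-s^2/2) + s * (-s * Real.exp (-s^2/2))) * II y) s :=
      ((hasDerivAt_id s).mul (fexpderiv s)).mul_const _
    have h2 : HasDerivAt (fun u : ℝ => y * Real.exp (-y^2/2) * II u)
        (y * Real.exp (-y^2/2) * Real.exp (-s^2/2)) s := (hII s).const_mul _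
    have := h1.sub h2
    convert this using 1 <;> first | rfl | ring
  have hanti : StrictAntiOn G (Ici y) := by
    apply strictAntiOn_of_deriv_neg (convex_Ici y)
      (Continuous.continuousOn (Differentiable.continuous fun s => (hG s).differentiableAt))
    intro s hs
    rw [interior_Ici] at hs
    rw [(hG s).deriv]
    have hys : y < s := hs
    have hs0 : 0 < s := lt_trans hy hys
    have hDy := Dpos hy
    have hIy := IIpos hy
    have hes : 0 < Real.exp (-s^2/2) := Real.exp_pos _
    have h1 : (1 - s^2) * II y < y * Real.exp (-y^2/2) := by
      nlinarith [mul_pos (show (0:ℝ) < s^2 - y^2 by nlinarith) hIy]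
    nlinarith [mul_lt_mul_of_pos_right h1 hes]
  have := hanti (le_refl y) (le_of_lt hyx) hyx
  have hGy : G y = 0 := by simp only [hGdef]; ring
  rw [hGy] at this
  simp only [hGdef] at this
  linarith

lemma core {a b c d : ℝ} (hb : 0 < b) (hd : 0 < d) (hba : b ≤ a) (hdc : d ≤ c)
    (hprod : a * b = c * d) (hca : c < a) : II a * II b < II c * II d := by
  have ha : 0 < a := lt_of_le_of_lt (le_trans hd.le hdc) hca
  have hc : 0 < c := lt_of_lt_of_le hd hdc
  set k : ℝ := a * b with hk
  have hkpos : 0 < k := mul_pos ha hb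
  have hsk : Real.sqrt k ≤ c := by
    rw [show c = Real.sqrt (c^2) by rw [Real.sqrt_sq hc.le]]
    apply Real.sqrt_le_sqrt
    calc k = c * d := hprod
    _ ≤ c * c := by nlinarith
    _ = c^2 := by ring
  set F : ℝ → ℝ := fun x => II x * II (k / x) with hFdef
  have hFanti : StrictAntiOn F (Ici (Real.sqrt k)) := by
    have hskpos : 0 < Real.sqrt k := Real.sqrt_pos.mpr hkpos
    apply strictAntiOn_of_deriv_neg (convex_Ici _)
    · apply ContinuousOn.mul IIcont.continuousOn
      apply IIcont.comp_continuousOn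
      apply ContinuousOn.div continuousOn_const continuousOn_id
      intro x hx
      exact ne_of_gt (lt_of_lt_of_le hskpos hx)
    · intro x hx
      rw [interior_Ici] at hx
      have hxpos : 0 < x := lt_trans hskpos hx
      have hxne : x ≠ 0 := ne_of_gt hxpos
      set y : ℝ := k / x with hy
      have hypos : 0 < y := div_pos hkpos hxpos
      have hyx : y < x := by
        rw [hy, div_lt_iff₀ hxpos]
        have : Real.sqrt k * Real.sqrt k < x * x :=
          mul_lt_mul'' hx hx hskpos.le hskpos.le
        rwa [Real.mul_self_sqrt hkpos.le] at this
      have hFx : HasDerivAt F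
          (Real.exp (-x^2/2) * II y + II x * (Real.exp (-y^2/2) * (k * -(x^2)⁻¹))) x := by
        have h2 : HasDerivAt (fun u : ℝ => II (k / u)) (Real.exp (-y^2/2) * (k * -(x^2)⁻¹)) x := by
          have hinv : HasDerivAt (fun u : ℝ => k / u) (k * -(x^2)⁻¹) x := by
            simpa [div_eq_mul_inv] using (hasDerivAt_inv hxne).const_mul k
          exact (hII y).comp x hinv
        exact (hII x).mul h2
      rw [hFx.deriv]
      have key := monog hypos hyx
      have hxy : y * x = k := div_mul_cancel₀ k hxne
      have hIy := IIpos hypos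
      have hIx := IIpos hxpos
      have hx2 : (0:ℝ) < x^2 := by positivity
      rw [show Real.exp (-x^2/2) * II y + II x * (Real.exp (-y^2/2) * (k * -(x^2)⁻¹))
          = (x * Real.exp (-x^2/2) * II y - y * Real.exp (-y^2/2) * II x) / x by
        field_simp
        rw [← hxy]; ring]
      exact div_neg_of_neg_of_pos (by linarith) hxpos
  have h1 : F a < F c := by
    have hca' : c ∈ Ici (Real.sqrt k) := hsk
    have haa : a ∈ Ici (Real.sqrt k) := le_trans hsk hca.le
    exact hFanti hca' haa hca
  have hb' : k / a = b := by rw [hk]; field_simp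
  have hd' : k / c = d := by
    have h : k = c * d := hprod
    rw [h, mul_comm]
    field_simp
  simpa [hFdef, hb', hd'] using h1

lemma sym {a b c d : ℝ} (ha : 0 < a) (hb : 0 < b) (hc : 0 < c) (hd : 0 < d)
    (hprod : a * b = c * d) (hmax : max c d < max a b) : II a * II b < II c * II d := by
  rcases le_total b a with h1 | h1 <;> rcases le_total d c with h2 | h2
  · rw [max_eq_left h1, max_eq_left h2] at hmax
    exact core hb hd h1 h2 hprod hmax
  · rw [max_eq_left h1, max_eq_right h2] at hmax
    have := core hb hc h1 h2 (by linarith [hprod]) hmax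
    linarith [this]
  · rw [max_eq_right h1, max_eq_left h2] at hmax
    have := core ha hd h1 h2 (by linarith [hprod]) hmax
    linarith [this]
  · rw [max_eq_right h1, max_eq_right h2] at hmax
    have := core ha hc h1 h2 (by linarith [hprod]) hmax
    linarith [this]

theorem stmt5 (σ r₁ r₂ s₁ s₂ : ℝ) (hσ : 0 < σ)
    (hr₁ : 0 < r₁) (hr₂ : 0 < r₂) (hs₁ : 0 < s₁) (hs₂ : 0 < s₂)
    (hprod : r₁ * r₂ = s₁ * s₂) (hmax : max s₁ s₂ < max r₁ r₂) :
    phi σ r₁ * phi σ r₂ < phi σ s₁ * phi σ s₂ := by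
  have h2σ : (0:ℝ) < 2 * σ := by linarith
  have key : II (r₁/(2*σ)) * II (r₂/(2*σ)) < II (s₁/(2*σ)) * II (s₂/(2*σ)) := by
    apply sym (by positivity) (by positivity) (by positivity) (by positivity)
    · field_simp
      linarith [hprod]
    · rw [max_div_div_right h2σ.le, max_div_div_right h2σ.le]
      exact (div_lt_div_iff_of_pos_right h2σ).mpr hmax
  have hC : 0 < Real.sqrt (2/Real.pi) := Real.sqrt_pos.mpr (by positivity)
  have e1 : ∀ ζ, phi σ ζ = Real.sqrt (2/Real.pi) * II (ζ/(2*σ)) := fun _ => rfl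
  rw [e1, e1, e1, e1]
  nlinarith [mul_lt_mul_of_pos_left key (show (0:ℝ) < Real.sqrt (2/Real.pi)^2 by positivity)]
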